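/- The map J ↦ (tr(JᵀJ), det J) composed with the convex function Φ(s, D) := s/D^{2/d} + λ(D² + 1)/D on {D > 0} shows that φ(J) := tr(JᵀJ)/(det J)^{2/d} + λ(det J + 1/det J) is polyconvex: there exists a function Ψ, convex jointly in (J, det J) on ℝ^{d×d} × (0,∞), with φ(J) = Ψ(J, det J) for all J with det J > 0. -/

import Mathlib

open Set

lemma scalar_key {c x s : ℝ} (hs : 0 < s) : 2*c*x - c^2*s ≤ x^2/s := by
  rw [le_div_iff₀ hs]; nlinarith [sq_nonneg (x - c*s)]

lemma scalar_ineq {p x1 x2 t1 t2 a b : ℝ} (hp0 : 0 ≤ p) (hp1 : p ≤ 1)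
    (ht1 : 0 < t1) (ht2 : 0 < t2)
    (ha : 0 ≤ a) (hb : 0 ≤ b) (hab : a + b = 1) :
    (a*x1 + b*x2)^2 / (a*t1 + b*t2) ^ p ≤ a * (x1^2 / t1 ^ p) + b * (x2^2 / t2 ^ p) := by
  have hT : 0 < a*t1 + b*t2 := by
    rcases eq_or_lt_of_le ha with h | h
    · have hb1 : b = 1 := by linarith
      simp [← h, hb1, ht2]
    · nlinarith [mul_nonneg hb ht2.le]
  have hu : (0:ℝ) < (a*t1 + b*t2) ^ p := Real.rpow_pos_of_pos hT p
  have hv1 : (0:ℝ) < t1 ^ p := Real.rpow_pos_of_pos ht1 p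
  have hv2 : (0:ℝ) < t2 ^ p := Real.rpow_pos_of_pos ht2 p
  have hcc : a * t1^p + b * t2^p ≤ (a*t1 + b*t2) ^ p := by
    have := (Real.concaveOn_rpow hp0 hp1).2 (mem_Ici.2 ht1.le) (mem_Ici.2 ht2.le) ha hb hab
    simpa [smul_eq_mul] using this
  set c : ℝ := (a*x1 + b*x2) / (a*t1 + b*t2) ^ p with hc
  calc (a*x1 + b*x2)^2 / (a*t1 + b*t2) ^ p
      = 2*c*(a*x1 + b*x2) - c^2*((a*t1 + b*t2) ^ p) := by
        rw [hc]; field_simp; ring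
    _ ≤ 2*c*(a*x1 + b*x2) - c^2*(a * t1^p + b * t2^p) := by nlinarith [sq_nonneg c]
    _ = a*(2*c*x1 - c^2*(t1^p)) + b*(2*c*x2 - c^2*(t2^p)) := by ring
    _ ≤ a * (x1^2 / t1 ^ p) + b * (x2^2 / t2 ^ p) :=
        add_le_add (mul_le_mul_of_nonneg_left (scalar_key hv1) ha)
          (mul_le_mul_of_nonneg_left (scalar_key hv2) hb)

lemma convexOn_normSq_div {E : Type*} [NormedAddCommGroup E] [NormedSpace ℝ E]
    {p : ℝ} (hp0 : 0 ≤ p) (hp1 : p ≤ 1) :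
    ConvexOn ℝ {q : E × ℝ | 0 < q.2} (fun q => ‖q.1‖^2 / q.2 ^ p) := by
  constructor
  · intro q hq r hr a b ha hb hab
    simp only [mem_setOf_eq, Prod.snd_add, Prod.smul_snd, smul_eq_mul] at *
    rcases eq_or_lt_of_le ha with h | h
    · have hb1 : b = 1 := by linarith
      simpa [← h, hb1] using hr
    · nlinarith [mul_nonneg hb hr.le]
  · rintro ⟨v1, t1⟩ h1 ⟨v2, t2⟩ h2 a b ha hb hab
    simp only [mem_setOf_eq] at h1 h2
    simp only [Prod.smul_mk, Prod.mk_add_mk, smul_eq_mul]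
    have htri : ‖a • v1 + b • v2‖ ≤ a*‖v1‖ + b*‖v2‖ := by
      refine (norm_add_le _ _).trans ?_
      rw [norm_smul, norm_smul, Real.norm_eq_abs, Real.norm_eq_abs,
        abs_of_nonneg ha, abs_of_nonneg hb]
    have hT : 0 < a*t1 + b*t2 := by
      rcases eq_or_lt_of_le ha with h | h
      · have hb1 : b = 1 := by linarith
        simpa [← h, hb1] using h2
      · nlinarith [mul_nonneg hb h2.le]
    calc ‖a • v1 + b • v2‖^2 / (a*t1 + b*t2) ^ p
        ≤ (a*‖v1‖ + b*‖v2‖)^2 / (a*t1 + b*t2) ^ p := by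
          exact (div_le_div_iff_of_pos_right (Real.rpow_pos_of_pos hT p)).mpr
            (pow_le_pow_left₀ (norm_nonneg _) htri 2)
      _ ≤ a * (‖v1‖^2 / t1 ^ p) + b * (‖v2‖^2 / t2 ^ p) :=
          scalar_ineq hp0 hp1 h1 h2 ha hb hab

theorem phi_polyconvex (d : ℕ) (hd : 2 ≤ d) (lam : ℝ) (hlam : 0 ≤ lam) :
    ∃ Ψ : Matrix (Fin d) (Fin d) ℝ × ℝ → ℝ,
      ConvexOn ℝ {p : Matrix (Fin d) (Fin d) ℝ × ℝ | 0 < p.2} Ψ ∧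
      ∀ J : Matrix (Fin d) (Fin d) ℝ, 0 < J.det →
        (J.transpose * J).trace / J.det ^ ((2 : ℝ) / d) + lam * (J.det + 1 / J.det) =
          Ψ (J, J.det) := by
  have hd0 : (0:ℝ) < d := by positivity
  have hp0 : (0:ℝ) ≤ 2 / d := by positivity
  have hp1 : (2:ℝ) / d ≤ 1 := by
    rw [div_le_one hd0]; exact_mod_cast hd
  -- linear map to Euclidean space
  let L : Matrix (Fin d) (Fin d) ℝ →ₗ[ℝ] EuclideanSpace ℝ (Fin d × Fin d) :=
    { toFun := fun J => WithLp.toLp 2 (fun ij : Fin d × Fin d => J ij.1 ij.2)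
      map_add' := fun _ _ => rfl
      map_smul' := fun _ _ => rfl }
  have hnorm : ∀ J : Matrix (Fin d) (Fin d) ℝ, ‖L J‖^2 = (J.transpose * J).trace := by
    intro J
    rw [EuclideanSpace.norm_eq, Real.sq_sqrt (by positivity)]
    simp only [Matrix.trace, Matrix.diag, Matrix.mul_apply, Matrix.transpose_apply,
      Real.norm_eq_abs, sq_abs]
    rw [← Finset.sum_product', Finset.univ_product_univ, ← Equiv.sum_comp
      (Equiv.prodComm (Fin d) (Fin d)) (fun x : Fin d × Fin d => J x.2 x.1 * J x.2 x.1)]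
    simp [L, sq, LinearMap.coe_mk, AddHom.coe_mk]
    rfl
  refine ⟨fun q => ‖L q.1‖^2 / q.2 ^ ((2:ℝ)/d) + lam * (q.2 + 1/q.2), ?_, ?_⟩
  · have M : (Matrix (Fin d) (Fin d) ℝ × ℝ) →ₗ[ℝ] (EuclideanSpace ℝ (Fin d × Fin d)) × ℝ :=
      L.prodMap (LinearMap.id)
    have h1 : ConvexOn ℝ {p : Matrix (Fin d) (Fin d) ℝ × ℝ | 0 < p.2}
        (fun q => ‖L q.1‖^2 / q.2 ^ ((2:ℝ)/d)) := by
      have := (convexOn_normSq_div (E := EuclideanSpace ℝ (Fin d × Fin d)) hp0 hp1).comp_linearMap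
        (L.prodMap (LinearMap.id))
      exact this
    have h2 : ConvexOn ℝ {p : Matrix (Fin d) (Fin d) ℝ × ℝ | 0 < p.2}
        (fun q : Matrix (Fin d) (Fin d) ℝ × ℝ => lam * (q.2 + 1/q.2)) := by
      have hbase : ConvexOn ℝ (Ioi (0:ℝ)) (fun x : ℝ => x + 1/x) := by
        have hinv : ConvexOn ℝ (Ioi (0:ℝ)) (fun x : ℝ => 1/x) := by
          have := (strictConvexOn_zpow (m := -1) (by decide) (by decide)).convexOn
          simpa [one_div, zpow_neg, zpow_one] using this
        exact (convexOn_id (convex_Ioi 0)).add hinv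
      have := (hbase.comp_linearMap (LinearMap.snd ℝ (Matrix (Fin d) (Fin d) ℝ) ℝ)).smul hlam
      exact this
    exact h1.add h2
  · intro J hJ
    simp only [hnorm]
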